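/- Let W ⊆ V be a two-dimensional subspace and let {e, f} be an orthonormal basis of W. Then ∠_M(W, JW) = ∠_M(JW, W) = arccos |ω(e, f)|. (In the paper's terminology this says that for a two-dimensional oriented subspace W the maximal angle between W and JW equals min{θ(W), π − θ(W)}, where θ(W) is the Kähler angle of W.) -/

import Mathlib

open scoped RealInnerProductSpace

/-- The angle `∠(x,y) = arccos(|⟨x,y⟩|/(‖x‖‖y‖)) ∈ [0,π/2]` between two vectors. -/
noncomputable def ang {V : Type*} [NormedAddCommGroup V] [InnerProductSpace ℝ V]
    (x y : V) : ℝ :=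
  Real.arccos (|(inner ℝ x y : ℝ)| / (‖x‖ * ‖y‖))

/-- The angle `∠_M(X,y) = inf{∠(x,y) : 0 ≠ x ∈ X}` between a subspace and a vector. -/
noncomputable def angMv {V : Type*} [NormedAddCommGroup V] [InnerProductSpace ℝ V]
    (X : Submodule ℝ V) (y : V) : ℝ :=
  sInf ((fun x => ang x y) '' {x : V | x ∈ X ∧ x ≠ 0})

/-- The maximal angle `∠_M(X,Y) = sup{∠_M(X,y) : 0 ≠ y ∈ Y}` between two subspaces. -/
noncomputable def angMM {V : Type*} [NormedAddCommGroup V] [InnerProductSpace ℝ V]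
    (X Y : Submodule ℝ V) : ℝ :=
  sSup ((fun y => angMv X y) '' {y : V | y ∈ Y ∧ y ≠ 0})

lemma arccos_anti {x y : ℝ} (h : x ≤ y) : Real.arccos y ≤ Real.arccos x := by
  simp only [Real.arccos]
  linarith [Real.monotone_arcsin h]

lemma angMv_const {V : Type*} [NormedAddCommGroup V] [InnerProductSpace ℝ V]
    (X : Submodule ℝ V) (y : V) (t : ℝ) (hy : y ≠ 0)
    (hub : ∀ x ∈ X, |(inner ℝ x y : ℝ)| ≤ t * (‖x‖ * ‖y‖))
    (hach : ∃ x, x ∈ X ∧ x ≠ 0 ∧ |(inner ℝ x y : ℝ)| = t * (‖x‖ * ‖y‖)) :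
    angMv X y = Real.arccos t := by
  obtain ⟨x₀, hx₀X, hx₀0, hx₀⟩ := hach
  have hx₀n : (0:ℝ) < ‖x₀‖ * ‖y‖ :=
    mul_pos (norm_pos_iff.mpr hx₀0) (norm_pos_iff.mpr hy)
  have hmem : Real.arccos t ∈ (fun x => ang x y) '' {x : V | x ∈ X ∧ x ≠ 0} := by
    refine ⟨x₀, ⟨hx₀X, hx₀0⟩, ?_⟩
    simp only [ang, hx₀, mul_div_assoc, div_self hx₀n.ne']
    rw [mul_one]
  apply le_antisymm
  · exact csInf_le ⟨0, fun z hz => by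
      obtain ⟨x, hx, rfl⟩ := hz; exact Real.arccos_nonneg _⟩ hmem
  · refine le_csInf ⟨_, hmem⟩ ?_
    rintro z ⟨x, ⟨hxX, hx0⟩, rfl⟩
    have hn : (0:ℝ) < ‖x‖ * ‖y‖ :=
      mul_pos (norm_pos_iff.mpr hx0) (norm_pos_iff.mpr hy)
    exact arccos_anti ((div_le_iff₀ hn).mpr (hub x hxX))

lemma angMM_const {V : Type*} [NormedAddCommGroup V] [InnerProductSpace ℝ V]
    (X Y : Submodule ℝ V) (v : ℝ)
    (h : ∀ y ∈ Y, y ≠ 0 → angMv X y = v)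
    (hne : ∃ y, y ∈ Y ∧ y ≠ 0) : angMM X Y = v := by
  obtain ⟨y₀, hy₀, hy₀0⟩ := hne
  have : ((fun y => angMv X y) '' {y : V | y ∈ Y ∧ y ≠ 0}) = {v} := by
    apply Set.Subset.antisymm
    · rintro _ ⟨y, ⟨hy, hy0⟩, rfl⟩
      exact h y hy hy0
    · rintro _ rfl
      exact ⟨y₀, ⟨hy₀, hy₀0⟩, h y₀ hy₀ hy₀0⟩
  rw [angMM, this, csSup_singleton]

set_option maxHeartbeats 1000000 in
theorem stmt9 {V : Type*} [NormedAddCommGroup V] [InnerProductSpace ℝ V]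
    [FiniteDimensional ℝ V]
    (J : V →ₗ[ℝ] V) (hiso : ∀ x : V, ‖J x‖ = ‖x‖) (hsq : ∀ x : V, J (J x) = -x)
    (W : Submodule ℝ V) (hdimW : Module.finrank ℝ W = 2)
    (e f : V) (he : e ∈ W) (hf : f ∈ W)
    (hee : ⟪e, e⟫ = (1 : ℝ)) (hff : ⟪f, f⟫ = (1 : ℝ)) (hef : ⟪e, f⟫ = (0 : ℝ))
    (hspan : Submodule.span ℝ {e, f} = W) :
    angMM W (W.map J) = Real.arccos |(inner ℝ (J e) f : ℝ)| ∧
    angMM (W.map J) W = Real.arccos |(inner ℝ (J e) f : ℝ)| := by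
  set c : ℝ := ⟪J e, f⟫ with hc
  -- J preserves inner products
  have Jlin : ∀ x y : V, ⟪J x, J y⟫ = (⟪x, y⟫ : ℝ) := by
    intro x y
    have := (LinearIsometry.inner_map_map ⟨J, hiso⟩ x y)
    exact this
  -- skewness
  have hskew : ∀ x y : V, ⟪J x, y⟫ = -(⟪x, J y⟫ : ℝ) := by
    intro x y
    have : ⟪J x, y⟫ = ⟪J x, -(J (J y))⟫ := by rw [hsq]; rw [neg_neg]
    rw [this, inner_neg_right, Jlin]
  have h1 : ⟪J e, e⟫ = (0:ℝ) := by
    have := hskew e e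
    have hsymm : ⟪e, J e⟫ = (⟪J e, e⟫ : ℝ) := real_inner_comm _ _
    linarith [this, hsymm]
  have h2 : ⟪J f, f⟫ = (0:ℝ) := by
    have := hskew f f
    have hsymm : ⟪f, J f⟫ = (⟪J f, f⟫ : ℝ) := real_inner_comm _ _
    linarith [this, hsymm]
  have h3 : ⟪J f, e⟫ = (-c : ℝ) := by
    have := hskew f e
    have hsymm : ⟪f, J e⟫ = (⟪J e, f⟫ : ℝ) := real_inner_comm _ _
    rw [this, hsymm, hc]
  have h1' : ⟪e, J e⟫ = (0:ℝ) := by rw [real_inner_comm, h1]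
  have h2' : ⟪f, J f⟫ = (0:ℝ) := by rw [real_inner_comm, h2]
  have h3' : ⟪e, J f⟫ = (-c : ℝ) := by rw [real_inner_comm, h3]
  have h4' : ⟪f, J e⟫ = (c : ℝ) := by rw [real_inner_comm, hc]
  have hfe : ⟪f, e⟫ = (0:ℝ) := by rw [real_inner_comm, hef]
  -- key inner product computations
  have key1 : ∀ a b α β : ℝ,
      ⟪a • e + b • f, J (α • e + β • f)⟫ = (c * (b * α - a * β) : ℝ) := by
    intro a b α β
    rw [map_add, map_smul, map_smul]
    simp only [inner_add_left, inner_add_right, real_inner_smul_left,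
      real_inner_smul_right, h1', h2', h3', h4']
    ring
  have key2 : ∀ a b α β : ℝ,
      ⟪J (a • e + b • f), α • e + β • f⟫ = (c * (a * β - b * α) : ℝ) := by
    intro a b α β
    rw [map_add, map_smul, map_smul]
    simp only [inner_add_left, inner_add_right, real_inner_smul_left,
      real_inner_smul_right, h1, h2, h3, ← hc]
    ring
  -- norms
  have hnorm : ∀ a b : ℝ, ‖a • e + b • f‖ = Real.sqrt (a ^ 2 + b ^ 2) := by
    intro a b
    have hin : ⟪a • e + b • f, a • e + b • f⟫ = (a ^ 2 + b ^ 2 : ℝ) := by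
      simp only [inner_add_left, inner_add_right, real_inner_smul_left,
        real_inner_smul_right, hee, hff, hef, hfe]
      ring
    rw [← Real.sqrt_sq (norm_nonneg _), ← real_inner_self_eq_norm_sq, hin]
  have hJnorm : ∀ a b : ℝ, ‖J (a • e + b • f)‖ = Real.sqrt (a ^ 2 + b ^ 2) := by
    intro a b; rw [hiso, hnorm]
  have hmemW : ∀ x : V, x ∈ W ↔ ∃ a b : ℝ, a • e + b • f = x := by
    intro x; rw [← hspan]; exact Submodule.mem_span_pair
  have hne0 : ∀ a b : ℝ, ¬(a = 0 ∧ b = 0) → a • e + b • f ≠ 0 := by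
    intro a b hab h0
    have : ‖a • e + b • f‖ = 0 := by rw [h0, norm_zero]
    rw [hnorm] at this
    have : a ^ 2 + b ^ 2 = 0 := by
      have h2 : Real.sqrt (a ^ 2 + b ^ 2) = 0 := this
      nlinarith [Real.sq_sqrt (by positivity : (0:ℝ) ≤ a ^ 2 + b ^ 2), sq_nonneg a, sq_nonneg b]
    exact hab ⟨by nlinarith [sq_nonneg a, sq_nonneg b], by nlinarith [sq_nonneg a, sq_nonneg b]⟩
  -- Cauchy-Schwarz in ℝ²
  have CS : ∀ a b α β : ℝ, |b * α - a * β| ≤ Real.sqrt (a ^ 2 + b ^ 2) * Real.sqrt (α ^ 2 + β ^ 2) := by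
    intro a b α β
    rw [← Real.sqrt_mul_self (abs_nonneg (b * α - a * β)), ← Real.sqrt_mul (by positivity)]
    apply Real.sqrt_le_sqrt
    nlinarith [sq_nonneg (a * α + b * β), sq_abs (b * α - a * β)]
  have he0 : e ≠ 0 := fun h => by simp [h] at hee
  -- direction A : angMv W (J w) = arccos |c| for nonzero w ∈ W
  have dirA : ∀ y ∈ W.map J, y ≠ 0 → angMv W y = Real.arccos |c| := by
    rintro y ⟨w, hwW, rfl⟩ hy0
    obtain ⟨α, β, rfl⟩ := (hmemW w).mp hwW
    have hw0 : ¬(α = 0 ∧ β = 0) := by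
      rintro ⟨rfl, rfl⟩; simp at hy0
    have hr : 0 < α ^ 2 + β ^ 2 := by
      rcases not_and_or.mp hw0 with h | h <;> positivity
    apply angMv_const _ _ _ hy0
    · intro x hxW
      obtain ⟨a, b, rfl⟩ := (hmemW x).mp hxW
      rw [key1, hnorm, hJnorm, abs_mul]
      calc |c| * |b * α - a * β|
          ≤ |c| * (Real.sqrt (a ^ 2 + b ^ 2) * Real.sqrt (α ^ 2 + β ^ 2)) :=
            mul_le_mul_of_nonneg_left (CS a b α β) (abs_nonneg c)
        _ = _ := by ring
    · refine ⟨(-β) • e + α • f, (hmemW _).mpr ⟨-β, α, rfl⟩, hne0 _ _ ?_, ?_⟩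
      · rintro ⟨hb, ha⟩; exact hw0 ⟨ha, by linarith [neg_eq_zero.mp hb]⟩
      · rw [key1, hnorm, hJnorm, abs_mul]
        have : (-β) ^ 2 + α ^ 2 = α ^ 2 + β ^ 2 := by ring
        rw [this, Real.mul_self_sqrt hr.le]
        congr 1
        rw [abs_of_nonneg (by nlinarith : (0:ℝ) ≤ α * α - -β * β)]
        ring
  -- direction B : angMv (W.map J) w = arccos |c| for nonzero w ∈ W
  have dirB : ∀ y ∈ W, y ≠ 0 → angMv (W.map J) y = Real.arccos |c| := by
    intro y hyW hy0
    obtain ⟨α, β, rfl⟩ := (hmemW y).mp hyW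
    have hw0 : ¬(α = 0 ∧ β = 0) := by
      rintro ⟨rfl, rfl⟩; simp at hy0
    have hr : 0 < α ^ 2 + β ^ 2 := by
      rcases not_and_or.mp hw0 with h | h <;> positivity
    apply angMv_const _ _ _ hy0
    · rintro x ⟨w, hwW, rfl⟩
      obtain ⟨a, b, rfl⟩ := (hmemW w).mp hwW
      rw [key2, hnorm, hJnorm, abs_mul]
      have : |a * β - b * α| = |b * α - a * β| := abs_sub_comm _ _
      rw [this]
      calc |c| * |b * α - a * β|
          ≤ |c| * (Real.sqrt (a ^ 2 + b ^ 2) * Real.sqrt (α ^ 2 + β ^ 2)) :=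
            mul_le_mul_of_nonneg_left (CS a b α β) (abs_nonneg c)
        _ = _ := by ring
    · refine ⟨J (β • e + (-α) • f), ⟨β • e + (-α) • f,
        (hmemW _).mpr ⟨β, -α, rfl⟩, rfl⟩, ?_, ?_⟩
      · intro h0
        have : β • e + (-α) • f ≠ 0 := hne0 _ _ (by
          rintro ⟨hb, ha⟩; exact hw0 ⟨by linarith [neg_eq_zero.mp ha], hb⟩)
        apply this
        have := hiso (β • e + (-α) • f)
        rw [h0, norm_zero] at this
        exact norm_eq_zero.mp this.symm
      · rw [key2, hnorm, hJnorm, abs_mul]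
        have h5 : β ^ 2 + (-α) ^ 2 = α ^ 2 + β ^ 2 := by ring
        rw [h5, Real.mul_self_sqrt hr.le]
        congr 1
        rw [abs_of_nonneg (by nlinarith : (0:ℝ) ≤ β * β - -α * α)]
        ring
  have hnonW : ∃ y, y ∈ W ∧ y ≠ 0 := ⟨e, he, he0⟩
  have hnonJW : ∃ y, y ∈ W.map J ∧ y ≠ 0 := by
    refine ⟨J e, ⟨e, he, rfl⟩, fun h => he0 ?_⟩
    have := hiso e; rw [h, norm_zero] at this
    exact norm_eq_zero.mp this.symm
  exact ⟨angMM_const _ _ _ dirA hnonJW, angMM_const _ _ _ dirB hnonW⟩
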